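/- For every integer n ≥ 2, every nonnegative integer m, and all elements x_1, …, x_n of a commutative ring, ∑_{σ ∈ S_n} ∑_{S ⊆ {1,…,n}, |S| even} (−1)^{inv(σ)} ∏_{i ∈ S} x_i^{m+2n−σ(i)−1} ∏_{i ∉ S} x_i^{m+σ(i)} = 0. -/
import Mathlib


/-- The vanishing sum used in the proof of Theorem III: for `n ≥ 2`,
`∑_{σ ∈ S_n} ∑_{S ⊆ {1,…,n}, |S| even} (-1)^{inv σ}
  ∏_{i∈S} x_i^{m+2n-σ(i)-1} ∏_{i∉S} x_i^{m+σ(i)} = 0`.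
With 0-indexed `σ(i)`, the exponents `m + 2n - σ(i) - 1` and `m + σ(i)` become
`m + 2n - 2 - σ i` and `m + 1 + σ i`; `(-1)^{inv σ}` is the sign of `σ`. -/
theorem even_subset_sum_vanishes (n m : ℕ) (hn : 2 ≤ n) (R : Type*) [CommRing R]
    (x : Fin n → R) :
    ∑ σ : Equiv.Perm (Fin n),
      ∑ S ∈ Finset.univ.filter (fun S : Finset (Fin n) => Even S.card),
        ((Equiv.Perm.sign σ : ℤ) : R) *
          ((∏ i ∈ S, x i ^ (m + 2 * n - 2 - (σ i : ℕ))) *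
            ∏ i ∈ Sᶜ, x i ^ (m + 1 + (σ i : ℕ))) = 0 := by
  classical
  set v1 : Fin n := ⟨n - 1, by omega⟩ with hv1
  set v2 : Fin n := ⟨n - 2, by omega⟩ with hv2
  have hv12 : v1 ≠ v2 := by simp [hv1, hv2, Fin.ext_iff]; omega
  -- rewrite each term's product pair as one product over univ
  have key : ∀ (σ : Equiv.Perm (Fin n)) (S : Finset (Fin n)),
      (∏ i ∈ S, x i ^ (m + 2 * n - 2 - (σ i : ℕ))) * ∏ i ∈ Sᶜ, x i ^ (m + 1 + (σ i : ℕ))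
      = ∏ i, x i ^ (if i ∈ S then m + 2 * n - 2 - (σ i : ℕ) else m + 1 + (σ i : ℕ)) := by
    intro σ S
    rw [← Finset.prod_mul_prod_compl S]
    congr 1
    · exact Finset.prod_congr rfl fun i hi => by rw [if_pos hi]
    · exact Finset.prod_congr rfl fun i hi => by rw [if_neg (by simpa using hi)]
  rw [← Finset.sum_product']
  refine Finset.sum_involution
    (fun p _ => (p.1 * Equiv.swap (p.1⁻¹ v1) (p.1⁻¹ v2),
       symmDiff p.2 {p.1⁻¹ v1, p.1⁻¹ v2})) ?_ ?_ ?_ ?_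
  · rintro ⟨σ, S⟩ hp
    set a := σ⁻¹ v1 with ha
    set b := σ⁻¹ v2 with hb
    have hab : a ≠ b := fun h => hv12 (by
      have := congrArg σ h
      simpa [ha, hb] using this)
    dsimp only
    rw [key, key]
    have hsign : ((Equiv.Perm.sign (σ * Equiv.swap a b) : ℤ) : R)
        = -((Equiv.Perm.sign σ : ℤ) : R) := by
      rw [Equiv.Perm.sign_mul, Equiv.Perm.sign_swap hab]
      push_cast
      ring
    rw [hsign]
    have hexp : ∀ i, (if i ∈ symmDiff S {a, b}
          then m + 2 * n - 2 - ((σ * Equiv.swap a b) i : ℕ)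
          else m + 1 + ((σ * Equiv.swap a b) i : ℕ))
        = (if i ∈ S then m + 2 * n - 2 - (σ i : ℕ) else m + 1 + (σ i : ℕ)) := by
      intro i
      have hσa : σ a = v1 := by simp [ha]
      have hσb : σ b = v2 := by simp [hb]
      rcases eq_or_ne i a with rfl | hia
      · have hmem : a ∈ symmDiff S {a, b} ↔ a ∉ S := by
          simp [Finset.mem_symmDiff]
        have : (σ * Equiv.swap a b) a = v2 := by
          simp [Equiv.Perm.mul_apply, hσb]
        rw [this, hσa]
        by_cases hS : a ∈ S
        · rw [if_neg (fun h' => hmem.1 h' hS), if_pos hS]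
          simp [hv1, hv2]; omega
        · rw [if_pos (hmem.2 hS), if_neg hS]
          simp [hv1, hv2]; omega
      rcases eq_or_ne i b with rfl | hib
      · have hmem : b ∈ symmDiff S {a, b} ↔ b ∉ S := by
          simp [Finset.mem_symmDiff]
        have : (σ * Equiv.swap a b) b = v1 := by
          simp [Equiv.Perm.mul_apply, Equiv.swap_apply_right, hσa]
        rw [this, hσb]
        by_cases hS : b ∈ S
        · rw [if_neg (fun h' => hmem.1 h' hS), if_pos hS]
          simp [hv1, hv2]; omega
        · rw [if_pos (hmem.2 hS), if_neg hS]
          simp [hv1, hv2]; omega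
      · have hmem : i ∈ symmDiff S {a, b} ↔ i ∈ S := by
          simp [Finset.mem_symmDiff, hia, hib]
        have : (σ * Equiv.swap a b) i = σ i := by
          simp [Equiv.Perm.mul_apply, Equiv.swap_apply_of_ne_of_ne hia hib]
        rw [this]
        by_cases hS : i ∈ S
        · rw [if_pos (hmem.2 hS), if_pos hS]
        · rw [if_neg (fun h' => hS (hmem.1 h')), if_neg hS]
    simp only [hexp]
    ring
  · rintro ⟨σ, S⟩ hp hf
    intro h
    have h1 := congrArg Prod.fst h
    dsimp only at h1
    have := congrArg (fun τ : Equiv.Perm (Fin n) => τ (σ⁻¹ v1)) h1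
    simp [Equiv.Perm.mul_apply] at this
    exact hv12 this.symm
  · rintro ⟨σ, S⟩ hp
    simp only [Finset.mem_product, Finset.mem_filter, Finset.mem_univ, true_and] at hp ⊢
    set a := σ⁻¹ v1 with ha
    set b := σ⁻¹ v2 with hb
    have hab : a ≠ b := fun h => hv12 (by
      have := congrArg σ h
      simpa [ha, hb] using this)
    have hcard : ({a, b} : Finset (Fin n)).card = 2 := Finset.card_pair hab
    have h2 : (symmDiff S {a, b}).card = (S \ {a, b}).card + ({a, b} \ S).card := by
      rw [symmDiff_def, Finset.sup_eq_union]
      exact Finset.card_union_of_disjoint disjoint_sdiff_sdiff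
    have h4 := Finset.card_sdiff_add_card_inter S ({a, b} : Finset (Fin n))
    have h5 := Finset.card_sdiff_add_card_inter ({a, b} : Finset (Fin n)) S
    rw [hcard] at h5
    have h6 : ({a, b} ∩ S : Finset (Fin n)).card = (S ∩ {a, b}).card := by
      rw [Finset.inter_comm]
    rw [Nat.even_iff] at hp ⊢
    omega
  · rintro ⟨σ, S⟩ hp
    dsimp only
    have e1 : (σ * Equiv.swap (σ⁻¹ v1) (σ⁻¹ v2))⁻¹ v1 = σ⁻¹ v2 := by
      simp [Equiv.Perm.mul_apply, Equiv.swap_apply_left]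
    have e2 : (σ * Equiv.swap (σ⁻¹ v1) (σ⁻¹ v2))⁻¹ v2 = σ⁻¹ v1 := by
      simp [Equiv.Perm.mul_apply, Equiv.swap_apply_right]
    rw [e1, e2]
    ext1
    · dsimp only
      rw [Equiv.swap_comm, mul_assoc, Equiv.swap_mul_self, mul_one]
    · dsimp only
      rw [Finset.pair_comm, symmDiff_symmDiff_cancel_right]
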